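/- Let n ≥ 5 and let φ̄ and ψ̄ be endomorphisms of Ā = A[B_n]/Z(A[B_n]), each of one of the explicit forms (1), (2a), (2b). If φ̄ = conj_{x̄} ∘ ψ̄ for some x̄ ∈ Ā, then φ̄ and ψ̄ are of the same form, with the same parameter κ ∈ {0, …, n−1} in case (1) and the same parameter ε ∈ {1,−1} in cases (2a) and (2b). -/

import Mathlib

/-- The defining relators of the Artin group of type `Bₙ`, as elements of the free
group on `n` generators (0-indexed: generator `i` corresponds to `r_{i+1}`). -/
def BnRels (n : ℕ) : Set (FreeGroup (Fin n)) :=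
  {w | (∃ i j : Fin n, (i : ℕ) + 1 = (j : ℕ) ∧ (j : ℕ) + 1 < n ∧
          w = FreeGroup.of i * FreeGroup.of j * FreeGroup.of i *
              (FreeGroup.of j * FreeGroup.of i * FreeGroup.of j)⁻¹) ∨
       (∃ i j : Fin n, (i : ℕ) + 2 = n ∧ (j : ℕ) + 1 = n ∧
          w = FreeGroup.of i * FreeGroup.of j * FreeGroup.of i * FreeGroup.of j *
              (FreeGroup.of j * FreeGroup.of i * FreeGroup.of j * FreeGroup.of i)⁻¹) ∨
       (∃ i j : Fin n, (i : ℕ) + 2 ≤ (j : ℕ) ∧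
          w = FreeGroup.of i * FreeGroup.of j * (FreeGroup.of j * FreeGroup.of i)⁻¹)}

/-- The Artin group `A[Bₙ]` of type `Bₙ`. -/
abbrev ArtinB (n : ℕ) := PresentedGroup (BnRels n)

/-- The standard generator `r_i` (1-indexed, `1 ≤ i ≤ n`). -/
def rB (n i : ℕ) : ArtinB n :=
  if h : i - 1 < n then PresentedGroup.of ⟨i - 1, h⟩ else 1

/-- `ρ_B = r_1 r_2 ⋯ r_n`. -/
def ρB (n : ℕ) : ArtinB n := ((List.range n).map fun i => rB n (i + 1)).prod

/-- `Δ_B = ρ_B ^ n`, the generator of the center. -/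
def ΔB (n : ℕ) : ArtinB n := ρB n ^ n

/-- `t_i` for `i` read modulo `n`: `t_i = r_i` for `1 ≤ i ≤ n-1`,
and `t_0 = ρ_B r_{n-1} ρ_B⁻¹`. -/
def tB (n i : ℕ) : ArtinB n :=
  if i % n = 0 then ρB n * rB n (n - 1) * (ρB n)⁻¹ else rB n (i % n)

/-- `Δ_Y = (t_1⋯t_{n-1})(t_1⋯t_{n-2})⋯(t_1t_2)t_1`, the Garside element of the
parabolic subgroup of type `A_{n-1}`. -/
def ΔY (n : ℕ) : ArtinB n :=
  ((List.range (n - 1)).map fun k =>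
    ((List.range (n - 1 - k)).map fun i => rB n (i + 1)).prod).prod

/-- `ρ_0 = t_1 t_2 ⋯ t_{n-1}`. -/
def ρ₀B (n : ℕ) : ArtinB n := ((List.range (n - 1)).map fun i => rB n (i + 1)).prod

/-- `ρ_1 = t_1⁻¹ t_2⁻¹ ⋯ t_{n-1}⁻¹`. -/
def ρ₁B (n : ℕ) : ArtinB n := ((List.range (n - 1)).map fun i => (rB n (i + 1))⁻¹).prod

/-- `ρ_k` for `k ∈ {0,1}`. -/
def ρkB (n k : ℕ) : ArtinB n := if k = 0 then ρ₀B n else ρ₁B n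

/-- `v_k = ρ_k t_{n-1} ρ_k⁻¹` for `k ∈ {0,1}`. -/
def vB (n k : ℕ) : ArtinB n := ρkB n k * rB n (n - 1) * (ρkB n k)⁻¹

/-- `δ = r_{n-1} r_{n-2} ⋯ r_2 r_1² r_2 ⋯ r_{n-2} r_{n-1}`. -/
def δB (n : ℕ) : ArtinB n :=
  ((List.range (n - 2)).map fun i => rB n (n - 1 - i)).prod * rB n 1 ^ 2 *
  ((List.range (n - 2)).map fun i => rB n (i + 2)).prod

/-- The quotient `Ā = A[Bₙ]/Z(A[Bₙ])`. -/
abbrev AbarB (n : ℕ) := ArtinB n ⧸ Subgroup.center (ArtinB n)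

/-- The canonical projection `π : A[Bₙ] → Ā`. -/
def πB (n : ℕ) : ArtinB n →* AbarB n := QuotientGroup.mk' (Subgroup.center (ArtinB n))

/-- `t̄_i = π(t_i)`. -/
def tbar (n i : ℕ) : AbarB n := πB n (tB n i)

/-- `ρ̄_B = π(ρ_B)`. -/
def ρbar (n : ℕ) : AbarB n := πB n (ρB n)

/-- The composition `conj_x ∘ φ` of an endomorphism with an inner automorphism. -/
def conjComp {G : Type*} [Group G] (x : G) (φ : G →* G) : G →* G :=
  (MulAut.conj x).toMonoidHom.comp φ

/-- Type (1): there are commuting `g, h` with `φ(t_i) = g` for all `0 ≤ i ≤ n-1`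
and `φ(ρ_B) = h`. -/
def IsType1 (n : ℕ) (φ : ArtinB n →* ArtinB n) : Prop :=
  ∃ g h : ArtinB n, g * h = h * g ∧ (∀ i < n, φ (tB n i) = g) ∧ φ (ρB n) = h

/-- Type (2a) with parameters `ε ∈ {1,-1}`, `p q : ℤ`. -/
def IsType2a (n : ℕ) (ε p q : ℤ) (φ : ArtinB n →* ArtinB n) : Prop :=
  (ε = 1 ∨ ε = -1) ∧ (∀ i < n, φ (tB n i) = tB n i ^ ε * ΔB n ^ p) ∧
    φ (ρB n) = ρB n * ΔB n ^ q

/-- Type (2b) with parameters `ε ∈ {1,-1}`, `p q : ℤ`. -/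
def IsType2b (n : ℕ) (ε p q : ℤ) (φ : ArtinB n →* ArtinB n) : Prop :=
  (ε = 1 ∨ ε = -1) ∧ (∀ i < n, φ (tB n i) = tB n (n - i) ^ ε * ΔB n ^ p) ∧
    φ (ρB n) = (ρB n)⁻¹ * ΔB n ^ q

/-- Type (3) with parameters `ε ∈ {1,-1}`, `k ∈ {0,1}`, `p q r s : ℤ`. -/
def IsType3 (n : ℕ) (ε : ℤ) (k : ℕ) (p q r s : ℤ) (φ : ArtinB n →* ArtinB n) : Prop :=
  (ε = 1 ∨ ε = -1) ∧ (k = 0 ∨ k = 1) ∧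
    (∀ i, 1 ≤ i → i ≤ n - 1 → φ (tB n i) = tB n i ^ ε * ΔY n ^ (2 * p) * ΔB n ^ q) ∧
    φ (tB n 0) = vB n k ^ ε * ΔY n ^ (2 * p) * ΔB n ^ q ∧
    φ (ρB n) = ρkB n k * ΔY n ^ (2 * r) * ΔB n ^ s

/-- Form (1) of an endomorphism of `Ā`, with parameter `κ`. -/
def IsForm1 (n : ℕ) (κ : ℕ) (φ : AbarB n →* AbarB n) : Prop :=
  κ < n ∧ φ (ρbar n) = ρbar n ^ κ ∧
    ∃ g : AbarB n, Commute g (ρbar n ^ κ) ∧ ∀ i < n, φ (tbar n i) = g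

/-- Form (2a) of an endomorphism of `Ā`, with parameter `ε ∈ {1,-1}`. -/
def IsForm2a (n : ℕ) (ε : ℤ) (φ : AbarB n →* AbarB n) : Prop :=
  (ε = 1 ∨ ε = -1) ∧ (∀ i < n, φ (tbar n i) = tbar n i ^ ε) ∧ φ (ρbar n) = ρbar n

/-- Form (2b) of an endomorphism of `Ā`, with parameter `ε ∈ {1,-1}`. -/
def IsForm2b (n : ℕ) (ε : ℤ) (φ : AbarB n →* AbarB n) : Prop :=
  (ε = 1 ∨ ε = -1) ∧ (∀ i < n, φ (tbar n i) = tbar n (n - i) ^ ε) ∧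
    φ (ρbar n) = (ρbar n)⁻¹



namespace BnProof

variable (n : ℕ)

abbrev Vn (n : ℕ) := Fin n → ℤ

def constSub (n : ℕ) : AddSubgroup (Vn n) := AddSubgroup.zmultiples (1 : Vn n)

abbrev Xn (n : ℕ) := Vn n ⧸ constSub n

def permV (σ : Equiv.Perm (Fin n)) : Vn n ≃+ Vn n where
  toFun v := v ∘ σ.symm
  invFun v := v ∘ σ
  left_inv v := by funext x; simp
  right_inv v := by funext x; simp
  map_add' u v := rfl

lemma permV_le (σ : Equiv.Perm (Fin n)) :
    constSub n ≤ (constSub n).comap (permV n σ).toAddMonoidHom := by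
  intro v hv
  obtain ⟨k, rfl⟩ := (AddSubgroup.mem_zmultiples_iff).1 hv
  exact (AddSubgroup.mem_zmultiples_iff).2 ⟨k, by funext x; simp [permV]⟩

def permX (σ : Equiv.Perm (Fin n)) : Xn n →+ Xn n :=
  QuotientAddGroup.map _ _ (permV n σ).toAddMonoidHom (permV_le n σ)

lemma permX_mk (σ : Equiv.Perm (Fin n)) (v : Vn n) :
    permX n σ (QuotientAddGroup.mk v) = QuotientAddGroup.mk (v ∘ σ.symm) := rfl

def permA (σ : Equiv.Perm (Fin n)) : Xn n ≃+ Xn n where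
  toFun := permX n σ
  invFun := permX n σ⁻¹
  left_inv := by
    intro x
    induction x using QuotientAddGroup.induction_on with
    | H v => rw [permX_mk, permX_mk]; congr 1; funext y; simp [Equiv.Perm.inv_def]
  right_inv := by
    intro x
    induction x using QuotientAddGroup.induction_on with
    | H v => rw [permX_mk, permX_mk]; congr 1; funext y; simp [Equiv.Perm.inv_def]
  map_add' := map_add _

def permHom : Equiv.Perm (Fin n) →* MulAut (Multiplicative (Xn n)) where
  toFun σ := AddEquiv.toMultiplicative (permA n σ)
  map_one' := by
    ext x
    obtain ⟨v⟩ := x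
    rfl
  map_mul' σ τ := by
    ext x
    obtain ⟨v⟩ := x
    rfl

abbrev Gn (n : ℕ) :=
  SemidirectProduct (Multiplicative (Xn n)) (Equiv.Perm (Fin n)) (permHom n)

def eV (j : Fin n) : Vn n := fun x => if x = j then 1 else 0

def eX (j : Fin n) : Multiplicative (Xn n) :=
  Multiplicative.ofAdd (QuotientAddGroup.mk (eV n j))

lemma permHom_eX (σ : Equiv.Perm (Fin n)) (j : Fin n) :
    permHom n σ (eX n j) = eX n (σ j) := by
  show Multiplicative.ofAdd (QuotientAddGroup.mk (eV n j ∘ σ.symm)) = _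
  unfold eX
  congr 1
  congr 1
  funext x
  simp only [eV, Function.comp_apply]
  by_cases h : x = σ j
  · simp [h]
  · rw [if_neg h, if_neg]
    intro hc
    exact h (by rw [← hc]; simp)

lemma mk_mul (u v : Multiplicative (Xn n)) (σ τ : Equiv.Perm (Fin n)) :
    (⟨u, σ⟩ : Gn n) * ⟨v, τ⟩ = ⟨u * permHom n σ v, σ * τ⟩ := rfl

/-- the image of the `i`-th generator -/
def gens (i : Fin n) : Gn n :=
  if h : (i : ℕ) + 1 < n then
    ⟨eX n i * eX n ⟨(i : ℕ) + 1, h⟩, Equiv.swap i ⟨(i : ℕ) + 1, h⟩⟩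
  else ⟨eX n i, 1⟩

lemma swap_conj_eq {α : Type*} [DecidableEq α] {a b c : α} (hab : a ≠ b) (hbc : b ≠ c)
    (hac : a ≠ c) : Equiv.swap a b * Equiv.swap b c * Equiv.swap a b = Equiv.swap a c := by
  have h := Equiv.swap_apply_apply (Equiv.swap a b) b c
  rw [Equiv.swap_inv, Equiv.swap_apply_right,
    Equiv.swap_apply_of_ne_of_ne (Ne.symm hac) (Ne.symm hbc)] at h
  exact h.symm

lemma swap_conj_eq' {α : Type*} [DecidableEq α] {a b c : α} (hab : a ≠ b) (hbc : b ≠ c)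
    (hac : a ≠ c) : Equiv.swap b c * Equiv.swap a b * Equiv.swap b c = Equiv.swap a c := by
  have h := Equiv.swap_apply_apply (Equiv.swap b c) a b
  rw [Equiv.swap_inv, Equiv.swap_apply_left,
    Equiv.swap_apply_of_ne_of_ne hab hac] at h
  exact h.symm

lemma gens_braid (i j : Fin n) (hij : (i : ℕ) + 1 = (j : ℕ)) (hj : (j : ℕ) + 1 < n) :
    gens n i * gens n j * gens n i = gens n j * gens n i * gens n j := by
  have hi : (i : ℕ) + 1 < n := by omega
  have hi2 : (i : ℕ) + 1 + 1 < n := by omega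
  set a : Fin n := i with ha
  set b : Fin n := ⟨(i : ℕ) + 1, hi⟩ with hb
  set c : Fin n := ⟨(i : ℕ) + 1 + 1, hi2⟩ with hc
  have hjb : j = b := by apply Fin.ext; simp [hb, ← hij]; rfl
  have hab : a ≠ b := by rw [ha, hb]; intro h; have := congrArg Fin.val h; simp at this
  have hbc : b ≠ c := by rw [hb, hc]; intro h; have := congrArg Fin.val h; simp at this
  have hac : a ≠ c := by rw [ha, hc]; intro h; have := congrArg Fin.val h; simp at this; omega
  have hga : gens n i = ⟨eX n a * eX n b, Equiv.swap a b⟩ := by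
    rw [gens, dif_pos hi]
  have hgb : gens n j = ⟨eX n b * eX n c, Equiv.swap b c⟩ := by
    rw [hjb, gens, dif_pos (show ((b : Fin n) : ℕ) + 1 < n from hi2)]
  rw [hga, hgb, mk_mul, mk_mul, mk_mul, mk_mul]
  have e1 : Equiv.swap a b * Equiv.swap b c * Equiv.swap a b = Equiv.swap a c :=
    swap_conj_eq hab hbc hac
  have e2 : Equiv.swap b c * Equiv.swap a b * Equiv.swap b c = Equiv.swap a c :=
    swap_conj_eq' hab hbc hac
  refine SemidirectProduct.ext ?_ ?_
  · show eX n a * eX n b * _ * _ = eX n b * eX n c * _ * _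
    simp only [map_mul, MulAut.mul_apply, permHom_eX,
      Equiv.swap_apply_left, Equiv.swap_apply_right,
      Equiv.swap_apply_of_ne_of_ne hab hac,
      Equiv.swap_apply_of_ne_of_ne (Ne.symm hac) (Ne.symm hbc)]
    ac_rfl
  · show Equiv.swap a b * Equiv.swap b c * Equiv.swap a b
        = Equiv.swap b c * Equiv.swap a b * Equiv.swap b c
    rw [e1, e2]
lemma gens_brel (i j : Fin n) (hi : (i : ℕ) + 2 = n) (hj : (j : ℕ) + 1 = n) :
    gens n i * gens n j * gens n i * gens n j = gens n j * gens n i * gens n j * gens n i := by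
  have hi1 : (i : ℕ) + 1 < n := by omega
  set a : Fin n := i with ha
  set b : Fin n := ⟨(i : ℕ) + 1, hi1⟩ with hb
  have hab : a ≠ b := by rw [ha, hb]; intro h; have := congrArg Fin.val h; simp at this
  have hjb : j = b := by apply Fin.ext; simp [hb]; omega
  have hga : gens n i = ⟨eX n a * eX n b, Equiv.swap a b⟩ := by rw [gens, dif_pos hi1]
  have hgb : gens n j = ⟨eX n b, 1⟩ := by
    rw [hjb, gens, dif_neg (show ¬ ((b : Fin n) : ℕ) + 1 < n by simp [hb]; omega)]
  rw [hga, hgb, mk_mul, mk_mul, mk_mul, mk_mul, mk_mul, mk_mul]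
  refine SemidirectProduct.ext ?_ ?_
  · simp only [map_mul, map_one, MulAut.one_apply, MulAut.mul_apply, permHom_eX,
      Equiv.swap_apply_left, Equiv.swap_apply_right, mul_one, one_mul,
      Equiv.swap_mul_self]
    ac_rfl
  · simp only [mul_one, one_mul]

lemma swap_disj_comm {α : Type*} [DecidableEq α] {a b c d : α} (hca : c ≠ a) (hcb : c ≠ b)
    (hda : d ≠ a) (hdb : d ≠ b) :
    Equiv.swap a b * Equiv.swap c d = Equiv.swap c d * Equiv.swap a b := by
  have h := Equiv.swap_apply_apply (Equiv.swap a b) c d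
  rw [Equiv.swap_inv, Equiv.swap_apply_of_ne_of_ne hca hcb,
    Equiv.swap_apply_of_ne_of_ne hda hdb] at h
  calc Equiv.swap a b * Equiv.swap c d
      = Equiv.swap a b * (Equiv.swap a b * (Equiv.swap c d * Equiv.swap a b)) := by
        rw [mul_assoc] at h; rw [← h]
    _ = Equiv.swap c d * Equiv.swap a b := by
        rw [← mul_assoc, Equiv.swap_mul_self, one_mul]

lemma gens_comm (i j : Fin n) (h : (i : ℕ) + 2 ≤ (j : ℕ)) :
    gens n i * gens n j = gens n j * gens n i := by
  have hi1 : (i : ℕ) + 1 < n := by omega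
  set a : Fin n := i with ha
  set b : Fin n := ⟨(i : ℕ) + 1, hi1⟩ with hb
  have hja : j ≠ a := by rw [ha]; intro hh; have := congrArg Fin.val hh; omega
  have hjb : j ≠ b := by rw [hb]; intro hh; have := congrArg Fin.val hh; simp at this; omega
  have hga : gens n i = ⟨eX n a * eX n b, Equiv.swap a b⟩ := by rw [gens, dif_pos hi1]
  by_cases hj : (j : ℕ) + 1 < n
  · set d : Fin n := ⟨(j : ℕ) + 1, hj⟩ with hd
    have hda : d ≠ a := by
      rw [ha, hd]; intro hh; have := congrArg Fin.val hh; simp at this; omega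
    have hdb : d ≠ b := by
      rw [hb, hd]; intro hh; have := congrArg Fin.val hh; simp at this; omega
    have hgb : gens n j = ⟨eX n j * eX n d, Equiv.swap j d⟩ := by rw [gens, dif_pos hj]
    rw [hga, hgb, mk_mul, mk_mul]
    refine SemidirectProduct.ext ?_ ?_
    · simp only [map_mul, permHom_eX,
        Equiv.swap_apply_of_ne_of_ne hja hjb, Equiv.swap_apply_of_ne_of_ne hda hdb,
        Equiv.swap_apply_of_ne_of_ne (Ne.symm hja) (Ne.symm hda),
        Equiv.swap_apply_of_ne_of_ne (Ne.symm hjb) (Ne.symm hdb)]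
      ac_rfl
    · exact swap_disj_comm hja hjb hda hdb
  · have hgb : gens n j = ⟨eX n j, 1⟩ := by rw [gens, dif_neg hj]
    rw [hga, hgb, mk_mul, mk_mul]
    refine SemidirectProduct.ext ?_ ?_
    · simp only [map_mul, map_one, MulAut.one_apply, permHom_eX,
        Equiv.swap_apply_of_ne_of_ne hja hjb]
      ac_rfl
    · simp only [mul_one, one_mul]

lemma gens_rels : ∀ r ∈ BnRels n, FreeGroup.lift (gens n) r = 1 := by
  intro r hr
  rcases hr with ⟨i, j, hij, hj, rfl⟩ | ⟨i, j, hi, hj, rfl⟩ | ⟨i, j, hij, rfl⟩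
  · simp only [map_mul, map_inv, FreeGroup.lift_apply_of, mul_inv_eq_one]
    exact gens_braid n i j hij hj
  · simp only [map_mul, map_inv, FreeGroup.lift_apply_of, mul_inv_eq_one]
    exact gens_brel n i j hi hj
  · simp only [map_mul, map_inv, FreeGroup.lift_apply_of, mul_inv_eq_one]
    exact gens_comm n i j hij

def Φn : ArtinB n →* Gn n := PresentedGroup.toGroup (gens_rels n)

lemma Φn_of (i : Fin n) : Φn n (PresentedGroup.of i) = gens n i :=
  PresentedGroup.toGroup.of (gens_rels n)

lemma sigma_eq_one (hn : 5 ≤ n) (σ : Equiv.Perm (Fin n))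
    (hcom : ∀ (k : ℕ) (h1 : k < n) (h2 : k + 1 < n),
      σ * Equiv.swap ⟨k, h1⟩ ⟨k + 1, h2⟩ = Equiv.swap ⟨k, h1⟩ ⟨k + 1, h2⟩ * σ) :
    σ = 1 := by
  -- dichotomy
  have key : ∀ (k : ℕ) (h1 : k < n) (h2 : k + 1 < n),
      σ ⟨k, h1⟩ = ⟨k, h1⟩ ∨ σ ⟨k, h1⟩ = ⟨k + 1, h2⟩ := by
    intro k h1 h2
    by_contra hc
    push_neg at hc
    obtain ⟨hc1, hc2⟩ := hc
    have happ := congrArg (fun τ => τ ⟨k, h1⟩) (hcom k h1 h2)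
    simp only [Equiv.Perm.mul_apply, Equiv.swap_apply_left] at happ
    -- happ : σ ⟨k+1⟩ = swap ⟨k⟩ ⟨k+1⟩ (σ ⟨k⟩)
    rw [Equiv.swap_apply_of_ne_of_ne hc1 hc2] at happ
    exact absurd (σ.injective happ) (by intro hh; have := congrArg Fin.val hh; simp at this)
  have next : ∀ (k : ℕ) (h1 : k < n) (h2 : k + 1 < n),
      σ ⟨k, h1⟩ = ⟨k, h1⟩ → σ ⟨k + 1, h2⟩ = ⟨k + 1, h2⟩ := by
    intro k h1 h2 hfix
    have happ := congrArg (fun τ => τ ⟨k, h1⟩) (hcom k h1 h2)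
    simp only [Equiv.Perm.mul_apply, Equiv.swap_apply_left] at happ
    rw [hfix, Equiv.swap_apply_left] at happ
    exact happ
  have base : σ ⟨0, by omega⟩ = ⟨0, by omega⟩ := by
    rcases key 0 (by omega) (by omega) with h | h
    · exact h
    · -- σ 0 = 1, so σ 1 ≠ 1,2 by injectivity; contradicts key 1
      exfalso
      have happ := congrArg (fun τ => τ ⟨0, by omega⟩) (hcom 0 (by omega) (by omega))
      simp only [Equiv.Perm.mul_apply, Equiv.swap_apply_left] at happ
      rw [h, Equiv.swap_apply_right] at happ
      rcases key 1 (by omega) (by omega) with h1 | h1 <;>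
        · rw [happ] at h1; have := congrArg Fin.val h1; simp at this
  have main : ∀ (k : ℕ) (h1 : k < n), σ ⟨k, h1⟩ = ⟨k, h1⟩ := by
    intro k
    induction k with
    | zero => intro h1; exact base
    | succ m ih => intro h1; exact next m (by omega) h1 (ih (by omega))
  ext x
  have hx : x = ⟨(x : ℕ), x.isLt⟩ := rfl
  rw [hx]
  have := main (x : ℕ) x.isLt
  simpa using congrArg Fin.val this

lemma center_to_one (hn : 5 ≤ n) :
    ∀ g ∈ Subgroup.center (ArtinB n), Φn n g = 1 := by
  intro g hg
  have hcom : ∀ i : Fin n, Φn n g * gens n i = gens n i * Φn n g := by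
    intro i
    have := (Subgroup.mem_center_iff.1 hg (PresentedGroup.of i)).symm
    have h2 := congrArg (Φn n) this
    rw [map_mul, map_mul, Φn_of] at h2
    exact h2
  set u : Multiplicative (Xn n) := (Φn n g).left with hu
  set σ : Equiv.Perm (Fin n) := (Φn n g).right with hσ
  have heta : Φn n g = ⟨u, σ⟩ := rfl
  -- component equations for swap-type generators
  have comp : ∀ (k : ℕ) (h1 : k < n) (h2 : k + 1 < n),
      (σ * Equiv.swap ⟨k, h1⟩ ⟨k + 1, h2⟩ = Equiv.swap ⟨k, h1⟩ ⟨k + 1, h2⟩ * σ) ∧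
      (u * permHom n σ (eX n ⟨k, h1⟩ * eX n ⟨k + 1, h2⟩)
        = eX n ⟨k, h1⟩ * eX n ⟨k + 1, h2⟩
          * permHom n (Equiv.swap ⟨k, h1⟩ ⟨k + 1, h2⟩) u) := by
    intro k h1 h2
    have hge : gens n ⟨k, h1⟩ = ⟨eX n ⟨k, h1⟩ * eX n ⟨k + 1, h2⟩,
        Equiv.swap ⟨k, h1⟩ ⟨k + 1, h2⟩⟩ := by
      rw [gens, dif_pos (show ((⟨k, h1⟩ : Fin n) : ℕ) + 1 < n from h2)]
    have hc := hcom ⟨k, h1⟩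
    rw [hge, heta, mk_mul, mk_mul] at hc
    have hl := congrArg SemidirectProduct.left hc
    have hr := congrArg SemidirectProduct.right hc
    simp only at hl hr
    exact ⟨hr, hl⟩
  have hσ1 : σ = 1 := by
    refine sigma_eq_one n hn σ ?_
    intro k h1 h2
    exact (comp k h1 h2).1
  -- now the translation part
  have hufix : ∀ (k : ℕ) (h1 : k < n) (h2 : k + 1 < n),
      permHom n (Equiv.swap ⟨k, h1⟩ ⟨k + 1, h2⟩) u = u := by
    intro k h1 h2
    have := (comp k h1 h2).2
    rw [hσ1, map_one, MulAut.one_apply] at this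
    have := mul_left_cancel ((mul_comm u _).symm.trans this)
    exact this.symm
  have hex : ∃ w : Vn n, (QuotientAddGroup.mk w : Xn n) = Multiplicative.toAdd u := by
    induction (Multiplicative.toAdd u) using QuotientAddGroup.induction_on with
    | H v => exact ⟨v, rfl⟩
  obtain ⟨w, hwu⟩ := hex
  have hw : ∀ (k : ℕ) (h1 : k < n) (h2 : k + 1 < n), w ⟨k + 1, h2⟩ = w ⟨k, h1⟩ := by
    intro k h1 h2
    have h3 : permX n (Equiv.swap (⟨k, h1⟩ : Fin n) ⟨k + 1, h2⟩) (Multiplicative.toAdd u)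
        = Multiplicative.toAdd u := congrArg Multiplicative.toAdd (hufix k h1 h2)
    have h4 : (QuotientAddGroup.mk (w ∘ (Equiv.swap (⟨k, h1⟩ : Fin n) ⟨k + 1, h2⟩).symm) : Xn n)
        = QuotientAddGroup.mk w := by
      rw [← permX_mk, hwu, h3, ← hwu]
    rw [QuotientAddGroup.eq] at h4
    obtain ⟨c, hc⟩ := (AddSubgroup.mem_zmultiples_iff).1 h4
    -- evaluate at an index not in {k, k+1}
    have hm : ∃ m : Fin n, (m : ℕ) ≠ k ∧ (m : ℕ) ≠ k + 1 := by
      by_cases h : k = 0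
      · exact ⟨⟨2, by omega⟩, by simp [h], by simp [h]⟩
      · exact ⟨⟨0, by omega⟩, by simpa using (Ne.symm h), by simp⟩
    obtain ⟨m, hm1, hm2⟩ := hm
    have hswapm : (Equiv.swap (⟨k, h1⟩ : Fin n) ⟨k + 1, h2⟩) m = m :=
      Equiv.swap_apply_of_ne_of_ne
        (by intro hh; exact hm1 (congrArg Fin.val hh))
        (by intro hh; exact hm2 (congrArg Fin.val hh))
    rw [Equiv.symm_swap] at hc
    have hc0 : c = 0 := by
      have := congrFun hc m
      simp only [Pi.add_apply, Pi.neg_apply, Function.comp_apply, Pi.smul_apply,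
        Pi.one_apply, smul_eq_mul, mul_one] at this
      rw [hswapm] at this
      omega
    have hck := congrFun hc ⟨k, h1⟩
    simp only [Pi.add_apply, Pi.neg_apply, Function.comp_apply, Pi.smul_apply,
      Pi.one_apply, smul_eq_mul, mul_one, hc0] at hck
    rw [Equiv.swap_apply_left] at hck
    omega
  have hwconst : ∀ (k : ℕ) (h1 : k < n), w ⟨k, h1⟩ = w ⟨0, by omega⟩ := by
    intro k
    induction k with
    | zero => intro h1; rfl
    | succ m ih => intro h1; rw [hw m (by omega) h1, ih (by omega)]
  have huone : (QuotientAddGroup.mk w : Xn n) = 0 := by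
    refine (QuotientAddGroup.eq_zero_iff w).2 ?_
    refine (AddSubgroup.mem_zmultiples_iff).2 ⟨w ⟨0, by omega⟩, ?_⟩
    funext m
    simp only [Pi.smul_apply, Pi.one_apply, smul_eq_mul, mul_one]
    have := hwconst (m : ℕ) m.isLt
    simp only [Fin.eta] at this
    omega
  rw [heta, hσ1]
  have h5 : Multiplicative.toAdd u = 0 := by rw [← hwu]; exact huone
  have h6 : u = 1 := by rw [← ofAdd_toAdd u, h5]; rfl
  rw [h6]
  rfl

def Φbar (hn : 5 ≤ n) : AbarB n →* Gn n :=
  QuotientGroup.lift (Subgroup.center (ArtinB n)) (Φn n) (center_to_one n hn)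

lemma Φbar_π (hn : 5 ≤ n) (g : ArtinB n) : Φbar n hn (πB n g) = Φn n g := rfl

def sumHom : Vn n →+ ZMod n where
  toFun v := ∑ x, ((v x : ℤ) : ZMod n)
  map_zero' := by simp
  map_add' u v := by
    simp only [Pi.add_apply, Int.cast_add]
    rw [Finset.sum_add_distrib]

lemma sumHom_const (c : ℤ) : sumHom n (c • (1 : Vn n)) = 0 := by
  simp only [sumHom, AddMonoidHom.coe_mk, ZeroHom.coe_mk, Pi.smul_apply, Pi.one_apply,
    smul_eq_mul, mul_one, Finset.sum_const, Finset.card_univ, Fintype.card_fin]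
  rw [nsmul_eq_mul]
  rw [show ((n : ℕ) : ZMod n) = 0 from ZMod.natCast_self n]
  ring

def Sx : Xn n →+ ZMod n :=
  QuotientAddGroup.lift (constSub n) (sumHom n) (by
    intro v hv
    obtain ⟨c, rfl⟩ := (AddSubgroup.mem_zmultiples_iff).1 hv
    exact sumHom_const n c)

lemma Sx_mk (v : Vn n) : Sx n (QuotientAddGroup.mk v) = ∑ x, ((v x : ℤ) : ZMod n) := rfl

lemma Sx_permX (σ : Equiv.Perm (Fin n)) (x : Xn n) : Sx n (permX n σ x) = Sx n x := by
  induction x using QuotientAddGroup.induction_on with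
  | H v =>
    rw [permX_mk, Sx_mk, Sx_mk]
    exact Equiv.sum_comp σ.symm (fun i => ((v i : ℤ) : ZMod n))

def χG : Gn n →* Multiplicative (ZMod n) where
  toFun g := Multiplicative.ofAdd (Sx n (Multiplicative.toAdd g.left))
  map_one' := by
    show Multiplicative.ofAdd (Sx n (Multiplicative.toAdd (1 : Multiplicative (Xn n)))) = 1
    simp
  map_mul' a b := by
    show Multiplicative.ofAdd (Sx n (Multiplicative.toAdd (a.left * permHom n a.right b.left))) = _
    have h1 : Multiplicative.toAdd (a.left * permHom n a.right b.left)
        = Multiplicative.toAdd a.left + permX n a.right (Multiplicative.toAdd b.left) := rfl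
    rw [h1, map_add, Sx_permX]
    rfl

def χn (hn : 5 ≤ n) : AbarB n →* Multiplicative (ZMod n) := (χG n).comp (Φbar n hn)

def Pn (hn : 5 ≤ n) : AbarB n →* Equiv.Perm (Fin n) :=
  (SemidirectProduct.rightHom).comp (Φbar n hn)

lemma Sx_eV (j : Fin n) : Sx n (QuotientAddGroup.mk (eV n j)) = 1 := by
  rw [Sx_mk]
  have : ∀ x : Fin n, ((eV n j x : ℤ) : ZMod n) = if x = j then 1 else 0 := by
    intro x
    simp [eV, apply_ite (fun z : ℤ => (z : ZMod n))]
  rw [Finset.sum_congr rfl (fun x _ => this x)]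
  simp

lemma χG_gens_swap (k : Fin n) (h : (k : ℕ) + 1 < n) :
    χG n (gens n k) = Multiplicative.ofAdd (2 : ZMod n) := by
  rw [gens, dif_pos h]
  show Multiplicative.ofAdd (Sx n (Multiplicative.toAdd (eX n k * eX n ⟨(k : ℕ) + 1, h⟩))) = _
  have h1 : Multiplicative.toAdd (eX n k * eX n ⟨(k : ℕ) + 1, h⟩)
      = QuotientAddGroup.mk (eV n k) + QuotientAddGroup.mk (eV n ⟨(k : ℕ) + 1, h⟩) := rfl
  rw [h1, map_add, Sx_eV, Sx_eV]
  norm_num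

lemma χG_gens_last (k : Fin n) (h : ¬ (k : ℕ) + 1 < n) :
    χG n (gens n k) = Multiplicative.ofAdd (1 : ZMod n) := by
  rw [gens, dif_neg h]
  show Multiplicative.ofAdd (Sx n (Multiplicative.toAdd (eX n k))) = _
  have h1 : Multiplicative.toAdd (eX n k) = QuotientAddGroup.mk (eV n k) := rfl
  rw [h1, Sx_eV]

lemma Pn_gens_swap (k : Fin n) (h : (k : ℕ) + 1 < n) :
    (gens n k).right = Equiv.swap k ⟨(k : ℕ) + 1, h⟩ := by
  rw [gens, dif_pos h]

lemma Φ_rB (i : ℕ) (h1 : 1 ≤ i) (h2 : i ≤ n) :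
    Φn n (rB n i) = gens n ⟨i - 1, by omega⟩ := by
  rw [rB, dif_pos (by omega : i - 1 < n)]
  exact Φn_of n _

lemma tbar_eq (i : ℕ) (h1 : 1 ≤ i) (h2 : i < n) : tbar n i = πB n (rB n i) := by
  rw [tbar, tB, if_neg (by rw [Nat.mod_eq_of_lt h2]; omega), Nat.mod_eq_of_lt h2]

lemma χn_tbar (hn : 5 ≤ n) (i : ℕ) (h1 : 1 ≤ i) (h2 : i < n) :
    χn n hn (tbar n i) = Multiplicative.ofAdd (2 : ZMod n) := by
  rw [tbar_eq n i h1 h2]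
  show χG n (Φbar n hn (πB n (rB n i))) = _
  rw [Φbar_π, Φ_rB n i h1 (by omega)]
  exact χG_gens_swap n ⟨i - 1, by omega⟩ (by simp; omega)

lemma Pn_tbar (hn : 5 ≤ n) (i : ℕ) (h1 : 1 ≤ i) (h2 : i < n) :
    Pn n hn (tbar n i) = Equiv.swap ⟨i - 1, by omega⟩ ⟨i, h2⟩ := by
  rw [tbar_eq n i h1 h2]
  show ((Φbar n hn (πB n (rB n i)))).right = _
  rw [Φbar_π, Φ_rB n i h1 (by omega)]
  rw [Pn_gens_swap n ⟨i - 1, by omega⟩ (by simp; omega)]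
  congr 1
  apply Fin.ext
  simp
  omega

lemma χn_ρbar (hn : 5 ≤ n) : χn n hn (ρbar n) = Multiplicative.ofAdd (-1 : ZMod n) := by
  obtain ⟨m, hm⟩ : ∃ m, n = m + 1 := ⟨n - 1, by omega⟩
  have hχ : χn n hn (ρbar n)
      = ((List.range n).map fun i => χG n (Φn n (rB n (i + 1)))).prod := by
    rw [ρbar, show χn n hn (πB n (ρB n)) = χG n (Φn n (ρB n)) from rfl, ρB]
    rw [map_list_prod, map_list_prod, List.map_map, List.map_map]
    rfl
  rw [hχ]
  have hsplit : List.range n = List.range m ++ [m] := by rw [hm, List.range_succ]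
  rw [hsplit, List.map_append, List.prod_append]
  have hlast : χG n (Φn n (rB n (m + 1))) = Multiplicative.ofAdd (1 : ZMod n) := by
    rw [Φ_rB n (m + 1) (by omega) (by omega)]
    exact χG_gens_last n _ (by simp; omega)
  have hmain : ((List.range m).map fun i => χG n (Φn n (rB n (i + 1)))).prod
      = Multiplicative.ofAdd (2 : ZMod n) ^ m := by
    rw [List.prod_eq_pow_card _ (Multiplicative.ofAdd (2 : ZMod n)) ?_, List.length_map,
      List.length_range]
    intro x hx
    simp only [List.mem_map, List.mem_range] at hx
    obtain ⟨i, hi, rfl⟩ := hx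
    rw [Φ_rB n (i + 1) (by omega) (by omega)]
    exact χG_gens_swap n _ (by simp; omega)
  rw [hmain, List.map_cons, List.map_nil, List.prod_cons, List.prod_nil, mul_one, hlast]
  have : (Multiplicative.ofAdd (2 : ZMod n)) ^ m = Multiplicative.ofAdd ((m : ZMod n) * 2) := by
    rw [← ofAdd_nsmul]
    congr 1
    simp [nsmul_eq_mul]
  rw [this, ← ofAdd_add]
  congr 1
  have hm0 : (m : ZMod n) = -1 := by
    have : ((m + 1 : ℕ) : ZMod n) = 0 := by rw [← hm]; exact ZMod.natCast_self n
    push_cast at this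
    linear_combination this
  rw [hm0]
  ring

lemma χn_conj (hn : 5 ≤ n) (x a : AbarB n) : χn n hn (x * a * x⁻¹) = χn n hn a := by
  rw [map_mul, map_mul, map_inv, mul_right_comm, mul_inv_cancel, one_mul]

lemma kappa_eq (hn : 5 ≤ n) {κ κ' : ℕ} (hκ : κ < n) (hκ' : κ' < n) (x : AbarB n)
    (h : ρbar n ^ κ = x * ρbar n ^ κ' * x⁻¹) : κ = κ' := by
  have h2 := congrArg (χn n hn) h
  rw [χn_conj n hn, map_pow, map_pow, χn_ρbar n hn, ← ofAdd_nsmul, ← ofAdd_nsmul] at h2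
  have h3 : κ • (-1 : ZMod n) = κ' • (-1 : ZMod n) := by
    have := congrArg Multiplicative.toAdd h2
    simpa using this
  have h4 : ((κ : ℕ) : ZMod n) = ((κ' : ℕ) : ZMod n) := by
    simp only [nsmul_eq_mul] at h3
    have := congrArg (fun z => -z) h3
    simpa using this
  rw [ZMod.natCast_eq_natCast_iff'] at h4
  rwa [Nat.mod_eq_of_lt hκ, Nat.mod_eq_of_lt hκ'] at h4

lemma two_ne (hn : 5 ≤ n) : (2 : ZMod n) ≠ 0 := by
  intro h
  have : ((2 : ℕ) : ZMod n) = 0 := by push_cast; exact h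
  rw [ZMod.natCast_eq_zero_iff] at this
  have := Nat.le_of_dvd (by omega) this
  omega

lemma four_ne (hn : 5 ≤ n) : (4 : ZMod n) ≠ 0 := by
  intro h
  have : ((4 : ℕ) : ZMod n) = 0 := by push_cast; exact h
  rw [ZMod.natCast_eq_zero_iff] at this
  have := Nat.le_of_dvd (by omega) this
  omega

lemma eps_eq (hn : 5 ≤ n) {ε ε' : ℤ} (he : ε = 1 ∨ ε = -1) (he' : ε' = 1 ∨ ε' = -1)
    {i : ℕ} (h1 : 1 ≤ i) (h2 : i < n) (x : AbarB n)
    (h : tbar n i ^ ε = x * tbar n i ^ ε' * x⁻¹) : ε = ε' := by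
  have hc := congrArg (χn n hn) h
  rw [χn_conj n hn, map_zpow, map_zpow, χn_tbar n hn i h1 h2] at hc
  have h3 : ε • (2 : ZMod n) = ε' • (2 : ZMod n) := by
    have := congrArg Multiplicative.toAdd hc
    simpa [toAdd_zpow] using this
  rcases he with rfl | rfl <;> rcases he' with rfl | rfl
  · rfl
  · exfalso; apply four_ne n hn
    simp only [one_smul, neg_smul] at h3
    linear_combination h3
  · exfalso; apply four_ne n hn
    simp only [one_smul, neg_smul] at h3
    linear_combination -h3
  · rfl

lemma rho_conj_inv (hn : 5 ≤ n) (x : AbarB n) (h : ρbar n = x * (ρbar n)⁻¹ * x⁻¹) :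
    False := by
  have hc := congrArg (χn n hn) h
  rw [χn_conj n hn, map_inv, χn_ρbar n hn] at hc
  have h3 : (-1 : ZMod n) = 1 := by
    have := congrArg Multiplicative.toAdd hc
    simpa using this
  apply two_ne n hn
  linear_combination -h3

lemma rho_conj_inv' (hn : 5 ≤ n) (x : AbarB n) (h : (ρbar n)⁻¹ = x * ρbar n * x⁻¹) :
    False := by
  have hc := congrArg (χn n hn) h
  rw [χn_conj n hn, map_inv, χn_ρbar n hn] at hc
  have h3 : (1 : ZMod n) = -1 := by
    have := congrArg Multiplicative.toAdd hc
    simpa using this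
  apply two_ne n hn
  linear_combination h3

lemma zpow_pm_inj {G : Type*} [Group G] {ε : ℤ} (he : ε = 1 ∨ ε = -1) {a b : G}
    (h : a ^ ε = b ^ ε) : a = b := by
  rcases he with rfl | rfl
  · simpa using h
  · simp only [zpow_neg, zpow_one] at h
    exact inv_injective h

lemma t1_ne_t2 (hn : 5 ≤ n) : tbar n 1 ≠ tbar n 2 := by
  intro h
  have hP := congrArg (Pn n hn) h
  rw [Pn_tbar n hn 1 (by omega) (by omega), Pn_tbar n hn 2 (by omega) (by omega)] at hP
  have h0 := congrArg (fun σ => σ ⟨0, by omega⟩) hP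
  rw [show (⟨1 - 1, by omega⟩ : Fin n) = ⟨0, by omega⟩ from rfl, Equiv.swap_apply_left] at h0
  rw [show (⟨2 - 1, by omega⟩ : Fin n) = ⟨1, by omega⟩ from rfl] at h0
  rw [Equiv.swap_apply_of_ne_of_ne (by intro hh; have := congrArg Fin.val hh; simp at this)
    (by intro hh; have := congrArg Fin.val hh; simp at this)] at h0
  have := congrArg Fin.val h0
  simp at this
lemma tn_ne_tn' (hn : 5 ≤ n) : tbar n (n - 1) ≠ tbar n (n - 2) := by
  intro h
  have hP := congrArg (Pn n hn) h
  rw [Pn_tbar n hn (n - 1) (by omega) (by omega),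
    Pn_tbar n hn (n - 2) (by omega) (by omega)] at hP
  have h0 := congrArg (fun σ => σ ⟨n - 1, by omega⟩) hP
  simp only at h0
  rw [Equiv.swap_apply_right] at h0
  rw [Equiv.swap_apply_of_ne_of_ne
    (by intro hh; have := congrArg Fin.val hh; simp at this; omega)
    (by intro hh; have := congrArg Fin.val hh; simp at this; omega)] at h0
  have := congrArg Fin.val h0
  simp at this
  omega

end BnProof

/-- conjugate endomorphisms of `Ā` of the explicit forms have the same
form and the same parameter. -/
theorem quotient_conjugate_endomorphisms_same_form (n : ℕ) (hn : 5 ≤ n)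
    (φ ψ : AbarB n →* AbarB n) (x : AbarB n) (hconj : φ = conjComp x ψ)
    (hφ : (∃ κ : ℕ, IsForm1 n κ φ) ∨ (∃ ε : ℤ, IsForm2a n ε φ) ∨
          (∃ ε : ℤ, IsForm2b n ε φ))
    (hψ : (∃ κ : ℕ, IsForm1 n κ ψ) ∨ (∃ ε : ℤ, IsForm2a n ε ψ) ∨
          (∃ ε : ℤ, IsForm2b n ε ψ)) :
    (∃ κ : ℕ, IsForm1 n κ φ ∧ IsForm1 n κ ψ) ∨
    (∃ ε : ℤ, IsForm2a n ε φ ∧ IsForm2a n ε ψ) ∨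
    (∃ ε : ℤ, IsForm2b n ε φ ∧ IsForm2b n ε ψ) := by
  have happ : ∀ a, φ a = x * ψ a * x⁻¹ := by
    intro a
    rw [hconj]
    rfl
  have hb1 : 1 < n := by omega
  have hb2 : 2 < n := by omega
  rcases hφ with ⟨κ, hφ1⟩ | ⟨ε, hφ2⟩ | ⟨ε, hφ3⟩
  · rcases hψ with ⟨κ', hψ1⟩ | ⟨ε', hψ2⟩ | ⟨ε', hψ3⟩
    · -- both Form1
      obtain ⟨hκ, hρ, g, hgc, hgt⟩ := hφ1
      obtain ⟨hκ', hρ', g', hgc', hgt'⟩ := hψ1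
      have hk : κ = κ' :=
        BnProof.kappa_eq n hn hκ hκ' x (by rw [← hρ, happ, hρ'])
      exact Or.inl ⟨κ, ⟨hκ, hρ, g, hgc, hgt⟩, hk ▸ ⟨hκ', hρ', g', hgc', hgt'⟩⟩
    · -- Form1 vs Form2a : contradiction
      exfalso
      obtain ⟨hκ, hρ, g, hgc, hgt⟩ := hφ1
      obtain ⟨hε', ht', hρ'⟩ := hψ2
      have e1 : g = x * tbar n 1 ^ ε' * x⁻¹ := by rw [← hgt 1 hb1, happ, ht' 1 hb1]
      have e2 : g = x * tbar n 2 ^ ε' * x⁻¹ := by rw [← hgt 2 hb2, happ, ht' 2 hb2]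
      have e3 : tbar n 1 ^ ε' = tbar n 2 ^ ε' :=
        mul_left_cancel (mul_right_cancel (e1.symm.trans e2))
      exact BnProof.t1_ne_t2 n hn (BnProof.zpow_pm_inj hε' e3)
    · -- Form1 vs Form2b : contradiction
      exfalso
      obtain ⟨hκ, hρ, g, hgc, hgt⟩ := hφ1
      obtain ⟨hε', ht', hρ'⟩ := hψ3
      have e1 : g = x * tbar n (n - 1) ^ ε' * x⁻¹ := by rw [← hgt 1 hb1, happ, ht' 1 hb1]
      have e2 : g = x * tbar n (n - 2) ^ ε' * x⁻¹ := by rw [← hgt 2 hb2, happ, ht' 2 hb2]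
      have e3 : tbar n (n - 1) ^ ε' = tbar n (n - 2) ^ ε' :=
        mul_left_cancel (mul_right_cancel (e1.symm.trans e2))
      exact BnProof.tn_ne_tn' n hn (BnProof.zpow_pm_inj hε' e3)
  · rcases hψ with ⟨κ', hψ1⟩ | ⟨ε', hψ2⟩ | ⟨ε', hψ3⟩
    · -- Form2a vs Form1 : contradiction
      exfalso
      obtain ⟨hε, ht, hρ⟩ := hφ2
      obtain ⟨hκ', hρ', g', hgc', hgt'⟩ := hψ1
      have e1 : tbar n 1 ^ ε = x * g' * x⁻¹ := by rw [← ht 1 hb1, happ, hgt' 1 hb1]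
      have e2 : tbar n 2 ^ ε = x * g' * x⁻¹ := by rw [← ht 2 hb2, happ, hgt' 2 hb2]
      exact BnProof.t1_ne_t2 n hn (BnProof.zpow_pm_inj hε (e1.trans e2.symm))
    · -- both Form2a
      obtain ⟨hε, ht, hρ⟩ := hφ2
      obtain ⟨hε', ht', hρ'⟩ := hψ2
      have he : ε = ε' := by
        refine BnProof.eps_eq n hn hε hε' (i := 1) (by omega) (by omega) x ?_
        rw [← ht 1 hb1, happ, ht' 1 hb1]
      exact Or.inr (Or.inl ⟨ε, ⟨hε, ht, hρ⟩, he ▸ ⟨hε', ht', hρ'⟩⟩)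
    · -- Form2a vs Form2b : contradiction
      exfalso
      obtain ⟨hε, ht, hρ⟩ := hφ2
      obtain ⟨hε', ht', hρ'⟩ := hψ3
      refine BnProof.rho_conj_inv n hn x ?_
      calc ρbar n = φ (ρbar n) := hρ.symm
        _ = x * ψ (ρbar n) * x⁻¹ := happ _
        _ = x * (ρbar n)⁻¹ * x⁻¹ := by rw [hρ']
  · rcases hψ with ⟨κ', hψ1⟩ | ⟨ε', hψ2⟩ | ⟨ε', hψ3⟩
    · -- Form2b vs Form1 : contradiction
      exfalso
      obtain ⟨hε, ht, hρ⟩ := hφ3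
      obtain ⟨hκ', hρ', g', hgc', hgt'⟩ := hψ1
      have e1 : tbar n (n - 1) ^ ε = x * g' * x⁻¹ := by rw [← ht 1 hb1, happ, hgt' 1 hb1]
      have e2 : tbar n (n - 2) ^ ε = x * g' * x⁻¹ := by rw [← ht 2 hb2, happ, hgt' 2 hb2]
      exact BnProof.tn_ne_tn' n hn (BnProof.zpow_pm_inj hε (e1.trans e2.symm))
    · -- Form2b vs Form2a : contradiction
      exfalso
      obtain ⟨hε, ht, hρ⟩ := hφ3
      obtain ⟨hε', ht', hρ'⟩ := hψ2
      refine BnProof.rho_conj_inv' n hn x ?_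
      calc (ρbar n)⁻¹ = φ (ρbar n) := hρ.symm
        _ = x * ψ (ρbar n) * x⁻¹ := happ _
        _ = x * ρbar n * x⁻¹ := by rw [hρ']
    · -- both Form2b
      obtain ⟨hε, ht, hρ⟩ := hφ3
      obtain ⟨hε', ht', hρ'⟩ := hψ3
      have he : ε = ε' := by
        refine BnProof.eps_eq n hn hε hε' (i := n - 1) (by omega) (by omega) x ?_
        rw [show tbar n (n - 1) ^ ε = φ (tbar n 1) from (ht 1 hb1).symm, happ, ht' 1 hb1]
      exact Or.inr (Or.inr ⟨ε, ⟨hε, ht, hρ⟩, he ▸ ⟨hε', ht', hρ'⟩⟩)
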